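/- Let m ≥ 1, let ⟪·,·⟫ be a nondegenerate symmetric bilinear form on ℝ^m, let B ⊆ ℝ^m be a convex body, and let N and R be the normal cone and recession cone of B. Then N* = R. If moreover B ≠ ℝ^m, then R* equals the topological closure of N; in particular the closure of N is a convex cone. -/

import Mathlib

open Set

/-- The dual cone of a set `K` with respect to a bilinear form `form`. -/
def dualCone {m : ℕ}
    (form : EuclideanSpace ℝ (Fin m) →ₗ[ℝ] EuclideanSpace ℝ (Fin m) →ₗ[ℝ] ℝ)
    (K : Set (EuclideanSpace ℝ (Fin m))) : Set (EuclideanSpace ℝ (Fin m)) :=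
  {xs | ∀ x ∈ K, 0 ≤ form xs x}

/-- The normal cone of a convex body `B` with respect to a bilinear form `form`. -/
def normalCone {m : ℕ}
    (form : EuclideanSpace ℝ (Fin m) →ₗ[ℝ] EuclideanSpace ℝ (Fin m) →ₗ[ℝ] ℝ)
    (B : Set (EuclideanSpace ℝ (Fin m))) : Set (EuclideanSpace ℝ (Fin m)) :=
  {w | w ≠ 0 ∧ ∃ p ∈ frontier B, ∀ x ∈ B, 0 ≤ form (x - p) w}

/-- The recession cone of a convex body `B`. -/
def recessionCone {m : ℕ} (B : Set (EuclideanSpace ℝ (Fin m))) :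
    Set (EuclideanSpace ℝ (Fin m)) :=
  {v | ∀ x ∈ B, ∀ t : ℝ, 0 ≤ t → x + t • v ∈ B}

open scoped InnerProductSpace

namespace Stmt9Aux

variable {m : ℕ}

/-- Euclidean normal cone. -/
def eN (B : Set (EuclideanSpace ℝ (Fin m))) : Set (EuclideanSpace ℝ (Fin m)) :=
  {u | u ≠ 0 ∧ ∃ p ∈ frontier B, ∀ x ∈ B, 0 ≤ ⟪u, x - p⟫_ℝ}

/-- Euclidean dual cone of a set. -/
def eD (K : Set (EuclideanSpace ℝ (Fin m))) : Set (EuclideanSpace ℝ (Fin m)) :=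
  {v | ∀ u ∈ K, 0 ≤ ⟪u, v⟫_ℝ}

/-- Vectors bounded below on `B`. -/
def eBdd (B : Set (EuclideanSpace ℝ (Fin m))) : Set (EuclideanSpace ℝ (Fin m)) :=
  {u | ∃ c : ℝ, ∀ x ∈ B, c ≤ ⟪u, x⟫_ℝ}

lemma eD_eq_innerDualCone (K : Set (EuclideanSpace ℝ (Fin m))) :
    eD K = (ProperCone.innerDual K : Set (EuclideanSpace ℝ (Fin m))) := rfl

lemma eD_isClosed (K : Set (EuclideanSpace ℝ (Fin m))) : IsClosed (eD K) := by
  rw [eD_eq_innerDualCone]; exact (ProperCone.innerDual K).isClosed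

lemma eD_closure (K : Set (EuclideanSpace ℝ (Fin m))) : eD (closure K) = eD K := by
  apply Set.Subset.antisymm
  · intro v hv u hu; exact hv u (subset_closure hu)
  · intro v hv u hu
    have hcl : K ⊆ {u | 0 ≤ ⟪u, v⟫_ℝ} := fun w hw => hv w hw
    have hc : IsClosed {u : EuclideanSpace ℝ (Fin m) | 0 ≤ ⟪u, v⟫_ℝ} :=
      isClosed_le continuous_const (continuous_id.inner continuous_const)
    exact closure_minimal hcl hc hu

/-- Projection onto a closed convex set, packaged. -/
lemma exists_proj {B : Set (EuclideanSpace ℝ (Fin m))} (hconv : Convex ℝ B)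
    (hclosed : IsClosed B) (hne : B.Nonempty) {y : EuclideanSpace ℝ (Fin m)} (hy : y ∉ B) :
    ∃ p, p ∈ B ∧ p ≠ y ∧ p ∈ frontier B ∧ ∀ x ∈ B, 0 ≤ ⟪p - y, x - p⟫_ℝ := by
  obtain ⟨p, hp, hmin⟩ :=
    exists_norm_eq_iInf_of_complete_convex hne hclosed.isComplete hconv y
  have hineq := (norm_eq_iInf_iff_real_inner_le_zero hconv hp).1 hmin
  have hpos : ∀ x ∈ B, 0 ≤ ⟪p - y, x - p⟫_ℝ := by
    intro x hx
    have := hineq x hx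
    have h2 : ⟪p - y, x - p⟫_ℝ = -⟪y - p, x - p⟫_ℝ := by
      rw [← inner_neg_left]; rw [neg_sub]
    rw [h2]; linarith
  have hpy : p ≠ y := fun h => hy (h ▸ hp)
  refine ⟨p, hp, hpy, ⟨subset_closure hp, ?_⟩, hpos⟩
  -- p is not in the interior
  intro hpint
  obtain ⟨ε, hε, hball⟩ := Metric.mem_nhds_iff.1 (mem_interior_iff_mem_nhds.1 hpint)
  have hyp : (0:ℝ) < ‖y - p‖ := by
    rw [norm_pos_iff, sub_ne_zero]; exact fun h => hpy h.symm
  set x := p + (ε / (2 * ‖y - p‖)) • (y - p) with hxdef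
  have hxB : x ∈ B := by
    apply hball
    have : dist x p = ε / 2 := by
      rw [dist_eq_norm, hxdef, add_sub_cancel_left, norm_smul, Real.norm_eq_abs,
        abs_of_pos (by positivity)]
      field_simp
    rw [Metric.mem_ball, this]; linarith
  have := hpos x hxB
  have hkey : ⟪p - y, y - p⟫_ℝ = -(‖y - p‖ ^ 2) := by
    rw [← neg_sub y p, inner_neg_left, real_inner_self_eq_norm_sq]
  rw [hxdef, add_sub_cancel_left, real_inner_smul_right, hkey] at this
  have hpos2 : 0 < ε / (2 * ‖y - p‖) * ‖y - p‖ ^ 2 := by positivity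
  nlinarith

/-- Key negativity: if `y = x + t•v ∉ B` and `p` is the projection, then `⟪p - y, v⟫ < 0`. -/
lemma key_neg {B : Set (EuclideanSpace ℝ (Fin m))} {x v p y : EuclideanSpace ℝ (Fin m)}
    {t : ℝ} (ht : 0 < t) (hyx : y = x + t • v) (hx : x ∈ B) (hpy : p ≠ y)
    (hproj : ∀ z ∈ B, 0 ≤ ⟪p - y, z - p⟫_ℝ) : ⟪p - y, v⟫_ℝ < 0 := by
  have h1 : 0 ≤ ⟪p - y, x - p⟫_ℝ := hproj x hx
  have h2 : ⟪p - y, y - x⟫_ℝ = ⟪p - y, y - p⟫_ℝ + ⟪p - y, p - x⟫_ℝ := by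
    rw [← inner_add_right]; congr 1; abel
  have h3 : ⟪p - y, y - p⟫_ℝ = -‖p - y‖ ^ 2 := by
    rw [← neg_sub p y, inner_neg_right, real_inner_self_eq_norm_sq]
  have h4 : ⟪p - y, p - x⟫_ℝ = -⟪p - y, x - p⟫_ℝ := by
    rw [← inner_neg_right, neg_sub]
  have hpy' : (0:ℝ) < ‖p - y‖ := by rw [norm_pos_iff, sub_ne_zero]; exact hpy
  have h5 : ⟪p - y, y - x⟫_ℝ < 0 := by rw [h2, h3, h4]; nlinarith
  have h6 : y - x = t • v := by rw [hyx]; abel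
  rw [h6, real_inner_smul_right] at h5
  nlinarith

lemma frontier_mem_of_closed {B : Set (EuclideanSpace ℝ (Fin m))} (hclosed : IsClosed B)
    {p : EuclideanSpace ℝ (Fin m)} (hp : p ∈ frontier B) : p ∈ B :=
  hclosed.closure_subset hp.1

/-- Euclidean Claim 1: the dual of the normal cone is the recession cone. -/
lemma eD_eN_eq_recession {B : Set (EuclideanSpace ℝ (Fin m))} (hconv : Convex ℝ B)
    (hclosed : IsClosed B) (hne : B.Nonempty) : eD (eN B) = recessionCone B := by
  apply Set.Subset.antisymm
  · -- dual of normals ⊆ recession cone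
    intro v hv x hx t ht
    by_contra hy
    rcases eq_or_lt_of_le ht with h | h
    · exact hy (by rw [← h, zero_smul, add_zero]; exact hx)
    obtain ⟨p, hpB, hpy, hpfr, hproj⟩ := exists_proj hconv hclosed hne hy
    have hmem : (p - (x + t • v)) ∈ eN B := by
      refine ⟨sub_ne_zero.2 hpy, p, hpfr, fun z hz => hproj z hz⟩
    have h1 := hv _ hmem
    have h2 := key_neg h rfl hx hpy hproj
    linarith
  · -- recession cone ⊆ dual of normals
    rintro v hv u ⟨hu0, p, hpfr, hp⟩
    have hpB : p ∈ B := frontier_mem_of_closed hclosed hpfr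
    have := hp (p + (1:ℝ) • v) (hv p hpB 1 zero_le_one)
    rwa [add_sub_cancel_left, one_smul] at this

/-- Euclidean: the recession cone is the dual of the set of bounded-below functionals. -/
lemma recession_eq_eD_eBdd {B : Set (EuclideanSpace ℝ (Fin m))} (hconv : Convex ℝ B)
    (hclosed : IsClosed B) (hne : B.Nonempty) : recessionCone B = eD (eBdd B) := by
  apply Set.Subset.antisymm
  · rintro r hr u ⟨c, hc⟩
    obtain ⟨x₀, hx₀⟩ := hne
    by_contra h
    push_neg at h
    set t := (⟪u, x₀⟫_ℝ - c + 1) / (-⟪u, r⟫_ℝ) with htdef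
    have hnum : (0:ℝ) < ⟪u, x₀⟫_ℝ - c + 1 := by have := hc x₀ hx₀; linarith
    have hden : (0:ℝ) < -⟪u, r⟫_ℝ := by linarith
    have ht : 0 ≤ t := le_of_lt (div_pos hnum hden)
    have hyB := hc _ (hr x₀ hx₀ t ht)
    rw [inner_add_right, real_inner_smul_right] at hyB
    have hd0 : ⟪u, r⟫_ℝ ≠ 0 := ne_of_lt h
    have : t * ⟪u, r⟫_ℝ = -(⟪u, x₀⟫_ℝ - c + 1) := by
      rw [htdef, div_mul_eq_mul_div, div_neg, mul_div_assoc, div_self hd0, mul_one]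
    linarith
  · intro v hv x hx t ht
    by_contra hy
    rcases eq_or_lt_of_le ht with h | h
    · exact hy (by rw [← h, zero_smul, add_zero]; exact hx)
    obtain ⟨p, hpB, hpy, hpfr, hproj⟩ := exists_proj hconv hclosed hne hy
    have hmem : (p - (x + t • v)) ∈ eBdd B := by
      refine ⟨⟪p - (x + t • v), p⟫_ℝ, fun z hz => ?_⟩
      have h1 := hproj z hz
      have h2 : ⟪p - (x + t • v), z⟫_ℝ
          = ⟪p - (x + t • v), z - p⟫_ℝ + ⟪p - (x + t • v), p⟫_ℝ := by
        rw [← inner_add_right, sub_add_cancel]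
      rw [h2]
      linarith
    have h1 := hv _ hmem
    have h2 := key_neg h rfl hx hpy hproj
    linarith

/-- The bounded-below set as a convex cone. -/
noncomputable def bddCone (B : Set (EuclideanSpace ℝ (Fin m))) : ConvexCone ℝ (EuclideanSpace ℝ (Fin m)) where
  carrier := eBdd B
  smul_mem' := by
    rintro c hc u ⟨c₀, hc₀⟩
    exact ⟨c * c₀, fun x hx => by
      rw [real_inner_smul_left]
      exact mul_le_mul_of_nonneg_left (hc₀ x hx) hc.le⟩
  add_mem' := by
    rintro u ⟨c₁, hc₁⟩ v ⟨c₂, hc₂⟩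
    exact ⟨c₁ + c₂, fun x hx => by
      rw [inner_add_left]; exact add_le_add (hc₁ x hx) (hc₂ x hx)⟩

lemma zero_mem_eBdd (B : Set (EuclideanSpace ℝ (Fin m))) : 0 ∈ eBdd B :=
  ⟨0, fun x _ => by rw [inner_zero_left]⟩

/-- Bipolar: `eD (eD (eBdd B)) = closure (eBdd B)`. -/
lemma bipolar (B : Set (EuclideanSpace ℝ (Fin m))) :
    eD (eD (eBdd B)) = closure (eBdd B) := by
  set K := (bddCone B).closure with hK
  have hKcoe : (K : Set (EuclideanSpace ℝ (Fin m))) = closure (eBdd B) :=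
    ConvexCone.coe_closure _
  have hKne : (K : Set (EuclideanSpace ℝ (Fin m))).Nonempty := by
    rw [hKcoe]; exact ⟨0, subset_closure (zero_mem_eBdd B)⟩
  have hKclosed : IsClosed (K : Set (EuclideanSpace ℝ (Fin m))) := by
    rw [hKcoe]; exact isClosed_closure
  have hbi := ProperCone.innerDual_innerDual
    (⟨K.toPointedCone (.of_nonempty_of_isClosed hKne hKclosed), hKclosed⟩ : ProperCone ℝ _)
  have hsets : ((ProperCone.innerDual (ProperCone.innerDual (K : Set (EuclideanSpace ℝ (Fin m))) :
      Set (EuclideanSpace ℝ (Fin m)))) : Set (EuclideanSpace ℝ (Fin m)))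
      = (K : Set (EuclideanSpace ℝ (Fin m))) := by
    exact congrArg (fun C : ProperCone ℝ (EuclideanSpace ℝ (Fin m)) => SetLike.coe C) hbi
  calc eD (eD (eBdd B)) = eD (eD (closure (eBdd B))) := by rw [eD_closure]
    _ = closure (eBdd B) := by
        rw [← hKcoe, eD_eq_innerDualCone, eD_eq_innerDualCone]
        exact hsets

lemma eN_smul {B : Set (EuclideanSpace ℝ (Fin m))} {u : EuclideanSpace ℝ (Fin m)} {c : ℝ}
    (hc : 0 < c) (hu : u ∈ eN B) : c • u ∈ eN B := by
  obtain ⟨hu0, p, hpfr, hp⟩ := hu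
  exact ⟨smul_ne_zero hc.ne' hu0, p, hpfr, fun x hx => by
    rw [real_inner_smul_left]; exact mul_nonneg hc.le (hp x hx)⟩

/-- Approximation: every nonzero bounded-below direction is a limit of normals. -/
lemma eBdd_subset_closure_eN {B : Set (EuclideanSpace ℝ (Fin m))} (hconv : Convex ℝ B)
    (hclosed : IsClosed B) (hne : B.Nonempty) {u : EuclideanSpace ℝ (Fin m)} (hu0 : u ≠ 0)
    (hu : u ∈ eBdd B) : u ∈ closure (eN B) := by
  -- get c and near-optimal x₀
  obtain ⟨c, x₀, hx₀, hcx, hax⟩ :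
      ∃ c : ℝ, ∃ x₀ ∈ B, (∀ x ∈ B, c ≤ ⟪u, x⟫_ℝ) ∧ ⟪u, x₀⟫_ℝ < c + 1 := by
    obtain ⟨c₀, hc₀⟩ := hu
    have hSne : ((fun x => ⟪u, x⟫_ℝ) '' B).Nonempty := hne.image _
    have hSbdd : BddBelow ((fun x => ⟪u, x⟫_ℝ) '' B) :=
      ⟨c₀, by rintro _ ⟨x, hx, rfl⟩; exact hc₀ x hx⟩
    obtain ⟨a, haS, hax⟩ := Real.lt_sInf_add_pos hSne one_pos
    obtain ⟨x₀, hx₀, rfl⟩ := haS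
    exact ⟨sInf ((fun x => ⟪u, x⟫_ℝ) '' B), x₀, hx₀,
      fun x hx => csInf_le hSbdd ⟨x, hx, rfl⟩, hax⟩
  rw [Metric.mem_closure_iff]
  intro ε hε
  have hu2 : (0:ℝ) < ‖u‖ := norm_pos_iff.2 hu0
  obtain ⟨r, hrpos, hr1, hr2⟩ : ∃ r : ℝ, 0 < r ∧ 1 < r * ‖u‖ ^ 2 ∧ 2 / r < ε ^ 2 := by
    refine ⟨1 / ‖u‖ ^ 2 + 2 / ε ^ 2 + 1, by positivity, ?_, ?_⟩
    · have h1 : (1 / ‖u‖ ^ 2) * ‖u‖ ^ 2 = 1 := by field_simp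
      have h2 : (0:ℝ) < (2 / ε ^ 2) * ‖u‖ ^ 2 := by positivity
      have h3 : (0:ℝ) < ‖u‖ ^ 2 := by positivity
      nlinarith
    · rw [div_lt_iff₀ (by positivity)]
      have h1 : (2 / ε ^ 2) * ε ^ 2 = 2 := by field_simp
      have h2 : (0:ℝ) < (1 / ‖u‖ ^ 2) * ε ^ 2 := by positivity
      have h3 : (0:ℝ) < ε ^ 2 := by positivity
      nlinarith
  have hyu : ⟪u, x₀ - r • u⟫_ℝ = ⟪u, x₀⟫_ℝ - r * ‖u‖ ^ 2 := by
    rw [inner_sub_right, real_inner_smul_right, real_inner_self_eq_norm_sq]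
  have hyB : x₀ - r • u ∉ B := by
    intro hyB
    have := hcx _ hyB
    rw [hyu] at this
    linarith
  obtain ⟨p, hpB, hpy, hpfr, hproj⟩ := exists_proj hconv hclosed hne hyB
  have hν0 : p - (x₀ - r • u) ≠ 0 := sub_ne_zero.2 hpy
  have hνpos : (0:ℝ) < ‖p - (x₀ - r • u)‖ := norm_pos_iff.2 hν0
  -- bound 2 : r * ‖u‖^2 - 1 ≤ ⟪u, ν⟫
  have hb2 : r * ‖u‖ ^ 2 - 1 ≤ ⟪u, p - (x₀ - r • u)⟫_ℝ := by
    have hexp : ⟪u, p - (x₀ - r • u)⟫_ℝ = ⟪u, p⟫_ℝ - ⟪u, x₀ - r • u⟫_ℝ := by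
      rw [inner_sub_right]
    have hcp := hcx p hpB
    rw [hexp, hyu]; linarith
  -- bound 1 : ‖ν‖ ≤ r * ‖u‖
  have hb1 : ‖p - (x₀ - r • u)‖ ≤ r * ‖u‖ := by
    have h0 := hproj x₀ hx₀
    have hx₀p : x₀ - p = r • u - (p - (x₀ - r • u)) := by module
    rw [hx₀p, inner_sub_right, real_inner_smul_right, real_inner_self_eq_norm_sq] at h0
    have hcs : ⟪p - (x₀ - r • u), u⟫_ℝ ≤ ‖p - (x₀ - r • u)‖ * ‖u‖ :=
      real_inner_le_norm _ u
    have hcomm : ⟪p - (x₀ - r • u), u⟫_ℝ = ⟪u, p - (x₀ - r • u)⟫_ℝ :=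
      real_inner_comm u _
    nlinarith
  have hwN : (‖u‖ / ‖p - (x₀ - r • u)‖) • (p - (x₀ - r • u)) ∈ eN B :=
    eN_smul (by positivity) ⟨hν0, p, hpfr, fun x hx => hproj x hx⟩
  refine ⟨_, hwN, ?_⟩
  have hwnorm : ‖(‖u‖ / ‖p - (x₀ - r • u)‖) • (p - (x₀ - r • u))‖ = ‖u‖ := by
    rw [norm_smul, Real.norm_eq_abs, abs_of_pos (by positivity)]
    field_simp
  have hwin : ⟪u, (‖u‖ / ‖p - (x₀ - r • u)‖) • (p - (x₀ - r • u))⟫_ℝ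
      = (‖u‖ / ‖p - (x₀ - r • u)‖) * ⟪u, p - (x₀ - r • u)⟫_ℝ := by
    rw [real_inner_smul_right]
  have hq : ‖u - (‖u‖ / ‖p - (x₀ - r • u)‖) • (p - (x₀ - r • u))‖ ^ 2
      = 2 * ‖u‖ ^ 2 - 2 * ((‖u‖ / ‖p - (x₀ - r • u)‖) * ⟪u, p - (x₀ - r • u)⟫_ℝ) := by
    rw [norm_sub_sq_real, hwnorm, hwin]; ring
  have h2 : ‖u‖ ^ 2 - 1 / r
      ≤ (‖u‖ / ‖p - (x₀ - r • u)‖) * ⟪u, p - (x₀ - r • u)⟫_ℝ := by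
    have hA : (r * ‖u‖ ^ 2 - 1) * ‖p - (x₀ - r • u)‖
        ≤ ⟪u, p - (x₀ - r • u)⟫_ℝ * (r * ‖u‖) := by
      nlinarith [hb1, hb2, hνpos.le, hrpos, hu2]
    rw [div_mul_eq_mul_div, le_div_iff₀ hνpos]
    have hrinv : r * (1 / r) = 1 := by field_simp
    nlinarith [hA, hrpos, hνpos, hu2]
  have hlt : ‖u - (‖u‖ / ‖p - (x₀ - r • u)‖) • (p - (x₀ - r • u))‖ ^ 2 < ε ^ 2 := by
    rw [hq]
    have hrr : (2:ℝ) / r = 2 * (1 / r) := by ring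
    nlinarith [h2, hr2]
  rw [dist_eq_norm]
  exact lt_of_pow_lt_pow_left₀ 2 hε.le hlt

/-- Euclidean Claim 2. -/
lemma eD_recession_eq_closure_eN {B : Set (EuclideanSpace ℝ (Fin m))} (hconv : Convex ℝ B)
    (hclosed : IsClosed B) (hne : B.Nonempty) (hBuniv : B ≠ univ) :
    eD (recessionCone B) = closure (eN B) := by
  -- first, eN is nonempty and 0 ∈ closure eN
  obtain ⟨y, hy⟩ := (ne_univ_iff_exists_notMem B).1 hBuniv
  obtain ⟨p, hpB, hpy, hpfr, hproj⟩ := exists_proj hconv hclosed hne hy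
  have hu₀ : (p - y) ∈ eN B := ⟨sub_ne_zero.2 hpy, p, hpfr, fun x hx => hproj x hx⟩
  have h0cl : (0 : EuclideanSpace ℝ (Fin m)) ∈ closure (eN B) := by
    rw [Metric.mem_closure_iff]
    intro ε hε
    have hn : (0:ℝ) < ‖p - y‖ := norm_pos_iff.2 (sub_ne_zero.2 hpy)
    refine ⟨(ε / (2 * ‖p - y‖)) • (p - y), eN_smul (by positivity) hu₀, ?_⟩
    rw [dist_eq_norm, zero_sub, norm_neg, norm_smul, Real.norm_eq_abs,
      abs_of_pos (by positivity)]
    rw [div_mul_eq_mul_div]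
    rw [div_lt_iff₀ (by positivity)]
    nlinarith
  apply Set.Subset.antisymm
  · -- eD R ⊆ closure eN
    rw [recession_eq_eD_eBdd hconv hclosed hne, bipolar]
    apply closure_minimal _ isClosed_closure
    intro u hu
    by_cases hu0 : u = 0
    · rw [hu0]; exact h0cl
    · exact eBdd_subset_closure_eN hconv hclosed hne hu0 hu
  · -- closure eN ⊆ eD R
    apply closure_minimal _ (eD_isClosed _)
    rintro u ⟨hu0, p', hpfr', hp'⟩ r hr
    have hpB' : p' ∈ B := frontier_mem_of_closed hclosed hpfr'
    have := hp' (p' + (1:ℝ) • r) (hr p' hpB' 1 zero_le_one)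
    rw [add_sub_cancel_left, one_smul] at this
    rwa [real_inner_comm]

end Stmt9Aux

theorem stmt_9 {m : ℕ} (hm : 1 ≤ m)
    (form : EuclideanSpace ℝ (Fin m) →ₗ[ℝ] EuclideanSpace ℝ (Fin m) →ₗ[ℝ] ℝ)
    (hsymm : ∀ x y, form x y = form y x)
    (hnd : ∀ x, (∀ y, form x y = 0) → x = 0)
    (B : Set (EuclideanSpace ℝ (Fin m)))
    (hconv : Convex ℝ B) (hclosed : IsClosed B) (hint : (interior B).Nonempty) :
    dualCone form (normalCone form B) = recessionCone B ∧
    (B ≠ univ →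
      dualCone form (recessionCone B) = closure (normalCone form B) ∧
      Convex ℝ (closure (normalCone form B)) ∧
      (∀ c : ℝ, 0 ≤ c → ∀ x ∈ closure (normalCone form B),
        c • x ∈ closure (normalCone form B))) := by
  classical
  obtain ⟨z₀, hz₀⟩ := hint
  have hne : B.Nonempty := ⟨z₀, interior_subset hz₀⟩
  -- the linear map Φ with ⟪Φ x, y⟫ = form x y
  let T : EuclideanSpace ℝ (Fin m) →ₗ[ℝ] EuclideanSpace ℝ (Fin m) :=
    { toFun := fun x => (InnerProductSpace.toDual ℝ (EuclideanSpace ℝ (Fin m))).symm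
        (LinearMap.toContinuousLinearMap (form x))
      map_add' := by
        intro x y
        rw [map_add, map_add, map_add]
      map_smul' := by
        intro c x
        rw [map_smul, map_smul, map_smul]
        rfl }
  have hT : ∀ x y : EuclideanSpace ℝ (Fin m), ⟪T x, y⟫_ℝ = form x y := by
    intro x y
    simp only [T, LinearMap.coe_mk, AddHom.coe_mk]
    rw [InnerProductSpace.toDual_symm_apply]
    rfl
  have hinj : Function.Injective T := by
    rw [injective_iff_map_eq_zero]
    intro x hx
    exact hnd x fun y => by rw [← hT x y, hx, inner_zero_left]
  have hsurj : Function.Surjective T := (LinearMap.injective_iff_surjective).1 hinj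
  let Φ : EuclideanSpace ℝ (Fin m) ≃ₗ[ℝ] EuclideanSpace ℝ (Fin m) :=
    LinearEquiv.ofBijective T ⟨hinj, hsurj⟩
  have hΦ : ∀ x y : EuclideanSpace ℝ (Fin m), ⟪Φ x, y⟫_ℝ = form x y := hT
  have hΦ0 : ∀ x : EuclideanSpace ℝ (Fin m), Φ x = 0 ↔ x = 0 := fun x => Φ.map_eq_zero_iff
  -- normalCone form B = Φ ⁻¹' eN B
  have hNeq : normalCone form B = Φ ⁻¹' (Stmt9Aux.eN B) := by
    ext w
    constructor
    · rintro ⟨hw0, p, hpfr, hp⟩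
      refine ⟨fun h => hw0 ((hΦ0 w).1 h), p, hpfr, fun x hx => ?_⟩
      rw [hΦ w (x - p), hsymm]
      exact hp x hx
    · rintro ⟨hw0, p, hpfr, hp⟩
      refine ⟨fun h => hw0 (by rw [h, map_zero]), p, hpfr, fun x hx => ?_⟩
      rw [← hsymm, ← hΦ w (x - p)]
      exact hp x hx
  -- dualCone form (normalCone form B) = eD (eN B)
  have hDeq : dualCone form (normalCone form B) = Stmt9Aux.eD (Stmt9Aux.eN B) := by
    ext v
    constructor
    · intro hv u hu
      have : Φ.symm u ∈ normalCone form B := by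
        rw [hNeq]; simp only [Set.mem_preimage, Φ.apply_symm_apply]; exact hu
      have h1 := hv _ this
      rw [hsymm, ← hΦ] at h1
      rwa [Φ.apply_symm_apply] at h1
    · intro hv w hw
      rw [hNeq] at hw
      have h1 := hv _ hw
      rwa [hΦ w v, ← hsymm] at h1
  -- dualCone form (recessionCone B) = Φ ⁻¹' (eD (recessionCone B))
  have hDReq : dualCone form (recessionCone B) = Φ ⁻¹' (Stmt9Aux.eD (recessionCone B)) := by
    ext v
    constructor
    · intro hv r hr
      rw [real_inner_comm, hΦ]
      exact hv r hr
    · intro hv r hr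
      have := hv r hr
      rwa [real_inner_comm, hΦ] at this
  -- closure of normal cone
  let hΦhomeo : EuclideanSpace ℝ (Fin m) ≃ₜ EuclideanSpace ℝ (Fin m) :=
    { toEquiv := Φ.toEquiv
      continuous_toFun := Φ.toLinearMap.continuous_of_finiteDimensional
      continuous_invFun := Φ.symm.toLinearMap.continuous_of_finiteDimensional }
  have hclN : closure (normalCone form B) = Φ ⁻¹' (closure (Stmt9Aux.eN B)) := by
    rw [hNeq]
    exact (hΦhomeo.preimage_closure (Stmt9Aux.eN B)).symm
  constructor
  · rw [hDeq, Stmt9Aux.eD_eN_eq_recession hconv hclosed hne]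
  · intro hBuniv
    have hmain : dualCone form (recessionCone B) = closure (normalCone form B) := by
      rw [hDReq, hclN, Stmt9Aux.eD_recession_eq_closure_eN hconv hclosed hne hBuniv]
    refine ⟨hmain, ?_, ?_⟩
    · rw [← hmain]
      intro v₁ h₁ v₂ h₂ a b ha hb hab
      intro x hx
      have : form (a • v₁ + b • v₂) x = a * form v₁ x + b * form v₂ x := by
        rw [map_add, map_smul, map_smul]
        rfl
      rw [this]
      exact add_nonneg (mul_nonneg ha (h₁ x hx)) (mul_nonneg hb (h₂ x hx))
    · rw [← hmain]
      intro c hc x hx r hr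
      have : form (c • x) r = c * form x r := by rw [map_smul]; rfl
      rw [this]
      exact mul_nonneg hc (hx r hr)
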